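/- For every p > 1 one has 6p²/(3p²−2) ≤ π_p, and if moreover 6p² > π² then π_p ≤ 12p²/(6p²−π²). -/

import Mathlib

open Real

lemma aux1 (x : ℝ) (hx : 0 ≤ x) : x - x^3/6 ≤ Real.sin x := by
  have hmono : MonotoneOn (fun t : ℝ => Real.sin t - (t - t^3/6)) (Set.Ici 0) := by
    apply monotoneOn_of_deriv_nonneg (convex_Ici 0)
    · exact (Real.continuous_sin.sub (continuous_id.sub ((continuous_pow 3).div_const 6))).continuousOn
    · intro y hy
      have hd : HasDerivAt (fun t : ℝ => Real.sin t - (t - t^3/6))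
          (Real.cos y - (1 - (3 * y^2)/6)) y := by
        have := (Real.hasDerivAt_sin y).sub ((hasDerivAt_id y).sub ((hasDerivAt_pow 3 y).div_const 6))
        exact this.congr_deriv (by norm_num)
      exact hd.differentiableAt.differentiableWithinAt
    · intro y hy
      rw [interior_Ici] at hy
      have hd : HasDerivAt (fun t : ℝ => Real.sin t - (t - t^3/6))
          (Real.cos y - (1 - (3 * y^2)/6)) y := by
        have := (Real.hasDerivAt_sin y).sub ((hasDerivAt_id y).sub ((hasDerivAt_pow 3 y).div_const 6))
        exact this.congr_deriv (by norm_num)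
      rw [hd.deriv]
      have := Real.one_sub_sq_div_two_le_cos (x := y)
      nlinarith
  have h0 := hmono (Set.self_mem_Ici) hx hx
  simp at h0
  nlinarith [h0]

lemma aux2 (x : ℝ) (hx : 0 ≤ x) : Real.cos x ≤ 1 - x^2/2 + x^4/24 := by
  have hmono : MonotoneOn (fun t : ℝ => (1 - t^2/2 + t^4/24) - Real.cos t) (Set.Ici 0) := by
    apply monotoneOn_of_deriv_nonneg (convex_Ici 0)
    · exact ((((continuous_const.sub ((continuous_pow 2).div_const 2)).add
        ((continuous_pow 4).div_const 24)).sub Real.continuous_cos)).continuousOn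
    · intro y hy
      have hd : HasDerivAt (fun t : ℝ => (1 - t^2/2 + t^4/24) - Real.cos t)
          ((0 - (2*y)/2 + (4*y^3)/24) - (-Real.sin y)) y := by
        have := (((hasDerivAt_const y (1:ℝ)).sub ((hasDerivAt_pow 2 y).div_const 2)).add
          ((hasDerivAt_pow 4 y).div_const 24)).sub (Real.hasDerivAt_cos y)
        exact this.congr_deriv (by norm_num)
      exact hd.differentiableAt.differentiableWithinAt
    · intro y hy
      rw [interior_Ici] at hy
      have hd : HasDerivAt (fun t : ℝ => (1 - t^2/2 + t^4/24) - Real.cos t)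
          ((0 - (2*y)/2 + (4*y^3)/24) - (-Real.sin y)) y := by
        have := (((hasDerivAt_const y (1:ℝ)).sub ((hasDerivAt_pow 2 y).div_const 2)).add
          ((hasDerivAt_pow 4 y).div_const 24)).sub (Real.hasDerivAt_cos y)
        exact this.congr_deriv (by norm_num)
      rw [hd.deriv]
      have := aux1 y hy.le
      nlinarith
  have h0 := hmono (Set.self_mem_Ici) hx hx
  simp at h0
  nlinarith [h0]

lemma aux3 (x : ℝ) (hx : 0 ≤ x) : Real.sin x ≤ x - x^3/6 + x^5/120 := by
  have hmono : MonotoneOn (fun t : ℝ => (t - t^3/6 + t^5/120) - Real.sin t) (Set.Ici 0) := by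
    apply monotoneOn_of_deriv_nonneg (convex_Ici 0)
    · exact (((continuous_id.sub ((continuous_pow 3).div_const 6)).add
        ((continuous_pow 5).div_const 120)).sub Real.continuous_sin).continuousOn
    · intro y hy
      have hd : HasDerivAt (fun t : ℝ => (t - t^3/6 + t^5/120) - Real.sin t)
          ((1 - (3*y^2)/6 + (5*y^4)/120) - Real.cos y) y := by
        have := (((hasDerivAt_id y).sub ((hasDerivAt_pow 3 y).div_const 6)).add
          ((hasDerivAt_pow 5 y).div_const 120)).sub (Real.hasDerivAt_sin y)
        exact this.congr_deriv (by norm_num)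
      exact hd.differentiableAt.differentiableWithinAt
    · intro y hy
      rw [interior_Ici] at hy
      have hd : HasDerivAt (fun t : ℝ => (t - t^3/6 + t^5/120) - Real.sin t)
          ((1 - (3*y^2)/6 + (5*y^4)/120) - Real.cos y) y := by
        have := (((hasDerivAt_id y).sub ((hasDerivAt_pow 3 y).div_const 6)).add
          ((hasDerivAt_pow 5 y).div_const 120)).sub (Real.hasDerivAt_sin y)
        exact this.congr_deriv (by norm_num)
      rw [hd.deriv]
      have := aux2 y hy.le
      nlinarith
  have h0 := hmono (Set.self_mem_Ici) hx hx
  simp at h0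
  nlinarith [h0]

/-- The generalized π: `π_p = 2π / (p sin(π/p))`. -/
noncomputable def pip (p : ℝ) : ℝ := 2 * π / (p * Real.sin (π / p))

theorem pip_bounds (p : ℝ) (hp : 1 < p) :
    6 * p ^ 2 / (3 * p ^ 2 - 2) ≤ pip p ∧
      (π ^ 2 < 6 * p ^ 2 → pip p ≤ 12 * p ^ 2 / (6 * p ^ 2 - π ^ 2)) := by
  have hp0 : (0:ℝ) < p := lt_trans one_pos hp
  have hπ := pi_pos
  have hxpos : 0 < π / p := by positivity
  have hxlt : π / p < π := div_lt_self hπ hp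
  have hs : 0 < Real.sin (π / p) := Real.sin_pos_of_pos_of_lt_pi hxpos hxlt
  have hps : 0 < p * Real.sin (π / p) := mul_pos hp0 hs
  have hπlo : 3.141592 < π := pi_gt_d6
  have hπhi : π < 3.15 := pi_lt_d2
  have h1 : Real.sin (π/p) ≤ π/p - (π/p)^3/6 + (π/p)^5/120 := aux3 _ hxpos.le
  have h2 : π/p - (π/p)^3/6 ≤ Real.sin (π/p) := aux1 _ hxpos.le
  have h1' : p^5 * Real.sin (π/p) ≤ π*p^4 - π^3*p^2/6 + π^5/120 := by
    have hp5 : (0:ℝ) < p^5 := by positivity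
    calc p^5 * Real.sin (π/p) ≤ p^5 * (π/p - (π/p)^3/6 + (π/p)^5/120) := by
          exact mul_le_mul_of_nonneg_left h1 hp5.le
      _ = π*p^4 - π^3*p^2/6 + π^5/120 := by field_simp
  have h2' : π*p^2 - π^3/6 ≤ p^3 * Real.sin (π/p) := by
    have hp3 : (0:ℝ) < p^3 := by positivity
    calc π*p^2 - π^3/6 = p^3 * (π/p - (π/p)^3/6) := by field_simp
      _ ≤ p^3 * Real.sin (π/p) := mul_le_mul_of_nonneg_left h2 hp3.le
  constructor
  · rw [pip, div_le_div_iff₀ (by nlinarith) hps]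
    have hπ2hi : π^2 < 9.9225 := by nlinarith
    have hπ2lo : 9.86 < π^2 := by nlinarith
    have hkey : π^5/20 ≤ π^3*p^2 - 4*π*p^2 := by
      have h4 : (0:ℝ) ≤ (π^2 - 4) * (p^2 - 1) :=
        mul_nonneg (by nlinarith) (by nlinarith)
      nlinarith [mul_pos hπ hπ, sq_nonneg (π^2 - 9.9), hπ.le]
    have hstep : 6*p^5*Real.sin (π/p) ≤ 2*π*p^2*(3*p^2-2) := by nlinarith [h1']
    have hp2 : (0:ℝ) < p^2 := by positivity
    have h3 : p^2 * (6*p^2*(p*Real.sin (π/p))) ≤ p^2 * (2*π*(3*p^2-2)) := by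
      linear_combination hstep
    exact le_of_mul_le_mul_left h3 hp2
  · intro hq
    rw [pip, div_le_div_iff₀ hps (by linarith)]
    nlinarith [h2']
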